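/- Let H₅ be a connected simple graph on at least 6 vertices containing two cycles C₁ and C₂, where C₂ has length at least 4 and is an endblock attached to the rest of H₅ at the vertex w (that is, every vertex of C₂ other than w has degree 2 in H₅, and w has degree at least 3). Let v₁ and v₂ be the two neighbors of w on C₂, let v₀ be the neighbor of v₂ on C₂ other than w, and let u₁u₂ be an edge of the cycle C₁ with u₁, u₂ not on C₂. Let H₆ = H₅ − {v₁w, v₀v₂, u₁u₂} + {u₁v₀, u₂v₁}. Then M₂(H₆) < M₂(H₅). -/

import Mathlib

open scoped Classical

lemma cycle_two_edges {V : Type*} {G : SimpleGraph V} {x : V} (c : G.Walk x x)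
    (hc : c.IsCycle) : ∃ y z : V, y ≠ z ∧ s(x, y) ∈ c.edges ∧ s(x, z) ∈ c.edges := by
  obtain ⟨y, h, q, rfl⟩ := SimpleGraph.Walk.not_nil_iff.mp hc.not_nil
  rw [SimpleGraph.Walk.cons_isCycle_iff] at hc
  have hq : ¬ q.Nil := fun hn =>
    h.ne' (q.eq_of_length_eq_zero (SimpleGraph.Walk.nil_iff_length_eq.mp hn))
  have hqr : ¬ q.reverse.Nil := by
    rwa [SimpleGraph.Walk.nil_iff_length_eq, SimpleGraph.Walk.length_reverse,
      ← SimpleGraph.Walk.nil_iff_length_eq]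
  obtain ⟨z, h', r, hr⟩ := SimpleGraph.Walk.not_nil_iff.mp hqr
  have hz : s(x, z) ∈ q.edges := by
    have : s(x, z) ∈ q.reverse.edges := by
      rw [hr, SimpleGraph.Walk.edges_cons]; exact List.mem_cons_self
    rwa [SimpleGraph.Walk.edges_reverse, List.mem_reverse] at this
  refine ⟨y, z, ?_, ?_, ?_⟩
  · rintro rfl; exact hc.2 hz
  · rw [SimpleGraph.Walk.edges_cons]; exact List.mem_cons_self
  · rw [SimpleGraph.Walk.edges_cons]; exact List.mem_cons_of_mem _ hz

lemma two_le_degree_of_mem_cycle_support {V : Type*} [Fintype V] {G : SimpleGraph V}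
    {u x : V} (c : G.Walk u u) (hc : c.IsCycle) (hx : x ∈ c.support) :
    2 ≤ G.degree x := by
  obtain ⟨y, z, hyz, hy, hz⟩ := cycle_two_edges (c.rotate x hx) (hc.rotate hx)
  have hsub : ({y, z} : Finset V) ⊆ G.neighborFinset x := by
    intro t ht
    rw [SimpleGraph.mem_neighborFinset]
    rcases Finset.mem_insert.mp ht with rfl | ht
    · exact (c.rotate x hx).adj_of_mem_edges hy
    · rw [Finset.mem_singleton] at ht; subst ht
      exact (c.rotate x hx).adj_of_mem_edges hz
  calc 2 = ({y, z} : Finset V).card := (Finset.card_pair hyz).symm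
    _ ≤ (G.neighborFinset x).card := Finset.card_le_card hsub
    _ = G.degree x := rfl

lemma mem_cycle_edges_of_degree_two {V : Type*} [Fintype V] {G : SimpleGraph V}
    {u x : V} (c : G.Walk u u) (hc : c.IsCycle) (hx : x ∈ c.support)
    (hdeg : G.degree x = 2) {t : V} (hadj : G.Adj x t) : s(x, t) ∈ c.edges := by
  obtain ⟨y, z, hyz, hy, hz⟩ := cycle_two_edges (c.rotate x hx) (hc.rotate hx)
  have hsub : ({y, z} : Finset V) ⊆ G.neighborFinset x := by
    intro s hs
    rw [SimpleGraph.mem_neighborFinset]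
    rcases Finset.mem_insert.mp hs with rfl | hs
    · exact (c.rotate x hx).adj_of_mem_edges hy
    · rw [Finset.mem_singleton] at hs; subst hs
      exact (c.rotate x hx).adj_of_mem_edges hz
  have hN : ({y, z} : Finset V) = G.neighborFinset x := by
    apply Finset.eq_of_subset_of_card_le hsub
    rw [Finset.card_pair hyz]
    exact le_of_eq hdeg
  have ht : t ∈ ({y, z} : Finset V) := by
    rw [hN, SimpleGraph.mem_neighborFinset]; exact hadj
  have hrot := (c.rotate_edges x hx).perm.mem_iff (a := s(x, t))
  rcases Finset.mem_insert.mp ht with rfl | ht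
  · exact hrot.mp hy
  · rw [Finset.mem_singleton] at ht; subst ht
    exact hrot.mp hz


/-- The second Zagreb index: the sum over all edges of the product of the
degrees of the two endpoints. -/
noncomputable def zagrebM2 {V : Type*} [Fintype V] (G : SimpleGraph V) : ℕ :=
  ∑ e ∈ G.edgeFinset,
    Sym2.lift ⟨fun x y => G.degree x * G.degree y, fun _ _ => Nat.mul_comm _ _⟩ e

/-- Operation III: `H₅` is connected on at least 6 vertices, `c₂` is a cycle of
length at least 4 which is an endblock attached at `w` (every vertex of `c₂`
other than `w` has degree 2 in `H₅`, and `w` has degree at least 3), `v₁, v₂`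
are the two neighbors of `w` on `c₂`, `v₀` is the neighbor of `v₂` on `c₂` other
than `w`, and `u₁u₂` is an edge of a cycle `c₁` with `u₁, u₂` not on `c₂`. Then
`H₆ = H₅ - {v₁w, v₀v₂, u₁u₂} + {u₁v₀, u₂v₁}` satisfies `M₂(H₆) < M₂(H₅)`. -/
theorem M2_operationIII_lt {V : Type*} [Fintype V] (H₅ : SimpleGraph V)
    (hconn : H₅.Connected) (hcard : 6 ≤ Fintype.card V)
    (w v₁ v₂ v₀ u₁ u₂ : V)
    (c₂ : H₅.Walk w w) (hc₂ : c₂.IsCycle) (hc₂len : 4 ≤ c₂.length)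
    (hend : ∀ x ∈ c₂.support, x ≠ w → H₅.degree x = 2)
    (hw : 3 ≤ H₅.degree w)
    (hv₁ : s(w, v₁) ∈ c₂.edges) (hv₂ : s(w, v₂) ∈ c₂.edges) (hv₁₂ : v₁ ≠ v₂)
    (hv₀ : s(v₂, v₀) ∈ c₂.edges) (hv₀w : v₀ ≠ w)
    (hcyc : ∃ (c₀ : V) (c₁ : H₅.Walk c₀ c₀), c₁.IsCycle ∧ s(u₁, u₂) ∈ c₁.edges)
    (hu₁ : u₁ ∉ c₂.support) (hu₂ : u₂ ∉ c₂.support)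
    (H₆ : SimpleGraph V)
    (hH₆ : H₆ = SimpleGraph.fromEdgeSet
      ((H₅.edgeSet \ {s(v₁, w), s(v₀, v₂), s(u₁, u₂)}) ∪ {s(u₁, v₀), s(u₂, v₁)})) :
    zagrebM2 H₆ < zagrebM2 H₅ := by
  classical
  obtain ⟨c₀, c₁, hc₁, hu⟩ := hcyc
  -- basic adjacency facts
  have hadjwv₁ : H₅.Adj w v₁ := c₂.adj_of_mem_edges hv₁
  have hadjwv₂ : H₅.Adj w v₂ := c₂.adj_of_mem_edges hv₂
  have hadjv₂v₀ : H₅.Adj v₂ v₀ := c₂.adj_of_mem_edges hv₀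
  have hadjU : H₅.Adj u₁ u₂ := c₁.adj_of_mem_edges hu
  -- support facts
  have hws : w ∈ c₂.support := c₂.start_mem_support
  have hv₁s : v₁ ∈ c₂.support := c₂.snd_mem_support_of_mem_edges hv₁
  have hv₂s : v₂ ∈ c₂.support := c₂.snd_mem_support_of_mem_edges hv₂
  have hv₀s : v₀ ∈ c₂.support := c₂.snd_mem_support_of_mem_edges hv₀
  -- distinctness
  have hv₁w : v₁ ≠ w := hadjwv₁.ne'
  have hv₂w : v₂ ≠ w := hadjwv₂.ne'
  have hv₀₂ : v₀ ≠ v₂ := hadjv₂v₀.ne'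
  have hu₁₂ : u₁ ≠ u₂ := hadjU.ne
  have hu₁w : u₁ ≠ w := fun h => hu₁ (h ▸ hws)
  have hu₂w : u₂ ≠ w := fun h => hu₂ (h ▸ hws)
  have hu₁v₁ : u₁ ≠ v₁ := fun h => hu₁ (h ▸ hv₁s)
  have hu₂v₁ : u₂ ≠ v₁ := fun h => hu₂ (h ▸ hv₁s)
  have hu₁v₂ : u₁ ≠ v₂ := fun h => hu₁ (h ▸ hv₂s)
  have hu₂v₂ : u₂ ≠ v₂ := fun h => hu₂ (h ▸ hv₂s)
  have hu₁v₀ : u₁ ≠ v₀ := fun h => hu₁ (h ▸ hv₀s)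
  have hu₂v₀ : u₂ ≠ v₀ := fun h => hu₂ (h ▸ hv₀s)
  -- degrees
  have hdv₁ : H₅.degree v₁ = 2 := hend v₁ hv₁s hv₁w
  have hdv₂ : H₅.degree v₂ = 2 := hend v₂ hv₂s hv₂w
  have hdv₀ : H₅.degree v₀ = 2 := hend v₀ hv₀s hv₀w
  have ha : 2 ≤ H₅.degree u₁ :=
    two_le_degree_of_mem_cycle_support c₁ hc₁ (c₁.fst_mem_support_of_mem_edges hu)
  have hb : 2 ≤ H₅.degree u₂ :=
    two_le_degree_of_mem_cycle_support c₁ hc₁ (c₁.snd_mem_support_of_mem_edges hu)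
  -- non-adjacency of the new edges in H₅
  have hnadj₄ : ¬ H₅.Adj v₀ u₁ := fun h =>
    hu₁ (c₂.snd_mem_support_of_mem_edges (mem_cycle_edges_of_degree_two c₂ hc₂ hv₀s hdv₀ h))
  have hnadj₅ : ¬ H₅.Adj v₁ u₂ := fun h =>
    hu₂ (c₂.snd_mem_support_of_mem_edges (mem_cycle_edges_of_degree_two c₂ hc₂ hv₁s hdv₁ h))
  -- adjacency characterization of H₆
  have hAdj₆ : ∀ x y : V, H₆.Adj x y ↔
      ((H₅.Adj x y ∧ s(x, y) ≠ s(v₁, w) ∧ s(x, y) ≠ s(v₀, v₂) ∧ s(x, y) ≠ s(u₁, u₂)) ∨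
        (s(x, y) = s(u₁, v₀) ∨ s(x, y) = s(u₂, v₁))) := by
    intro x y
    rw [hH₆, SimpleGraph.fromEdgeSet_adj]
    simp only [Set.mem_union, Set.mem_diff, SimpleGraph.mem_edgeSet, Set.mem_insert_iff,
      Set.mem_singleton_iff]
    constructor
    · rintro ⟨⟨h, hne⟩ | h, hxy⟩
      · push_neg at hne
        exact Or.inl ⟨h, hne.1, hne.2.1, hne.2.2⟩
      · exact Or.inr h
    · rintro (⟨h, h1, h2, h3⟩ | (h | h))
      · exact ⟨Or.inl ⟨h, by tauto⟩, h.ne⟩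
      · refine ⟨Or.inr (Or.inl h), ?_⟩
        rcases Sym2.eq_iff.mp h with ⟨rfl, rfl⟩ | ⟨rfl, rfl⟩
        · exact hu₁v₀
        · exact hu₁v₀.symm
      · refine ⟨Or.inr (Or.inr h), ?_⟩
        rcases Sym2.eq_iff.mp h with ⟨rfl, rfl⟩ | ⟨rfl, rfl⟩
        · exact hu₂v₁
        · exact hu₂v₁.symm
  -- degree bound
  have hD : ∀ x : V, H₆.degree x ≤ H₅.degree x := by
    intro x
    by_cases h1 : x = u₁
    · rw [h1]
      have hsub : H₆.neighborFinset u₁ ⊆ insert v₀ ((H₅.neighborFinset u₁).erase u₂) := by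
        intro y hy
        rw [SimpleGraph.mem_neighborFinset, hAdj₆] at hy
        rcases hy with ⟨h, _, _, h3⟩ | (h | h)
        · refine Finset.mem_insert_of_mem (Finset.mem_erase.mpr ⟨?_, ?_⟩)
          · rintro rfl; exact h3 rfl
          · rwa [SimpleGraph.mem_neighborFinset]
        · rcases Sym2.eq_iff.mp h with ⟨-, rfl⟩ | ⟨h', -⟩
          · exact Finset.mem_insert_self _ _
          · exact absurd h' hu₁v₀
        · rcases Sym2.eq_iff.mp h with ⟨h', -⟩ | ⟨h', -⟩
          · exact absurd h' hu₁₂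
          · exact absurd h' hu₁v₁
      calc H₆.degree u₁ = (H₆.neighborFinset u₁).card := rfl
        _ ≤ (insert v₀ ((H₅.neighborFinset u₁).erase u₂)).card := Finset.card_le_card hsub
        _ ≤ ((H₅.neighborFinset u₁).erase u₂).card + 1 := Finset.card_insert_le _ _
        _ = (H₅.neighborFinset u₁).card - 1 + 1 :=
          by rw [Finset.card_erase_of_mem ((SimpleGraph.mem_neighborFinset _ _ _).mpr hadjU)]
        _ ≤ H₅.degree u₁ := by
          have : (H₅.neighborFinset u₁).card = H₅.degree u₁ := rfl
          omega
    by_cases h2 : x = u₂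
    · rw [h2]
      have hsub : H₆.neighborFinset u₂ ⊆ insert v₁ ((H₅.neighborFinset u₂).erase u₁) := by
        intro y hy
        rw [SimpleGraph.mem_neighborFinset, hAdj₆] at hy
        rcases hy with ⟨h, _, _, h3⟩ | (h | h)
        · refine Finset.mem_insert_of_mem (Finset.mem_erase.mpr ⟨?_, ?_⟩)
          · rintro rfl; exact h3 (Sym2.eq_swap)
          · rwa [SimpleGraph.mem_neighborFinset]
        · rcases Sym2.eq_iff.mp h with ⟨h', -⟩ | ⟨h', -⟩
          · exact absurd h' hu₁₂.symm
          · exact absurd h' hu₂v₀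
        · rcases Sym2.eq_iff.mp h with ⟨-, rfl⟩ | ⟨h', -⟩
          · exact Finset.mem_insert_self _ _
          · exact absurd h' hu₂v₁
      calc H₆.degree u₂ = (H₆.neighborFinset u₂).card := rfl
        _ ≤ (insert v₁ ((H₅.neighborFinset u₂).erase u₁)).card := Finset.card_le_card hsub
        _ ≤ ((H₅.neighborFinset u₂).erase u₁).card + 1 := Finset.card_insert_le _ _
        _ = (H₅.neighborFinset u₂).card - 1 + 1 :=
          by rw [Finset.card_erase_of_mem ((SimpleGraph.mem_neighborFinset _ _ _).mpr hadjU.symm)]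
        _ ≤ H₅.degree u₂ := by
          have : (H₅.neighborFinset u₂).card = H₅.degree u₂ := rfl
          omega
    by_cases hvv : v₀ = v₁
    · -- degenerate case v₀ = v₁
      by_cases h3 : x = v₁
      · rw [h3]
        have hadjv₁v₂ : H₅.Adj v₁ v₂ := (hvv ▸ hadjv₂v₀).symm
        have hNv₁ : ({w, v₂} : Finset V) = H₅.neighborFinset v₁ := by
          apply Finset.eq_of_subset_of_card_le
          · intro t ht
            rw [SimpleGraph.mem_neighborFinset]
            rcases Finset.mem_insert.mp ht with rfl | ht
            · exact hadjwv₁.symm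
            · rw [Finset.mem_singleton] at ht; subst ht; exact hadjv₁v₂
          · rw [Finset.card_pair (fun h => hv₂w h.symm)]
            exact le_of_eq hdv₁
        have hsub : H₆.neighborFinset v₁ ⊆ {u₁, u₂} := by
          intro y hy
          rw [SimpleGraph.mem_neighborFinset, hAdj₆] at hy
          rcases hy with ⟨h, hh1, hh2, _⟩ | (h | h)
          · have : y ∈ ({w, v₂} : Finset V) := by
              rw [hNv₁, SimpleGraph.mem_neighborFinset]; exact h
            rcases Finset.mem_insert.mp this with rfl | hy'
            · exact absurd rfl hh1
            · rw [Finset.mem_singleton] at hy'; subst hy'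
              exact absurd (by rw [hvv]) hh2
          · rcases Sym2.eq_iff.mp h with ⟨h', -⟩ | ⟨-, rfl⟩
            · exact absurd h' hu₁v₁.symm
            · exact Finset.mem_insert_self _ _
          · rcases Sym2.eq_iff.mp h with ⟨h', -⟩ | ⟨-, rfl⟩
            · exact absurd h' hu₂v₁.symm
            · exact Finset.mem_insert.mpr (Or.inr (Finset.mem_singleton_self _))
        calc H₆.degree v₁ = (H₆.neighborFinset v₁).card := rfl
          _ ≤ ({u₁, u₂} : Finset V).card := Finset.card_le_card hsub
          _ ≤ 2 := (Finset.card_insert_le _ _).trans (by simp)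
          _ = H₅.degree v₁ := hdv₁.symm
      · -- generic vertex (x ≠ u₁, u₂, v₁ = v₀)
        have h4 : x ≠ v₀ := fun h => h3 (h.trans hvv)
        have hsub : H₆.neighborFinset x ⊆ H₅.neighborFinset x := by
          intro y hy
          rw [SimpleGraph.mem_neighborFinset, hAdj₆] at hy
          rw [SimpleGraph.mem_neighborFinset]
          rcases hy with ⟨h, _, _, _⟩ | (h | h)
          · exact h
          · rcases Sym2.eq_iff.mp h with ⟨h', _⟩ | ⟨h', _⟩
            · exact absurd h' h1
            · exact absurd h' h4
          · rcases Sym2.eq_iff.mp h with ⟨h', _⟩ | ⟨h', _⟩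
            · exact absurd h' h2
            · exact absurd h' h3
        exact Finset.card_le_card hsub
    · -- v₀ ≠ v₁
      by_cases h3 : x = v₁
      · rw [h3]
        have hsub : H₆.neighborFinset v₁ ⊆ insert u₂ ((H₅.neighborFinset v₁).erase w) := by
          intro y hy
          rw [SimpleGraph.mem_neighborFinset, hAdj₆] at hy
          rcases hy with ⟨h, hh1, _, _⟩ | (h | h)
          · refine Finset.mem_insert_of_mem (Finset.mem_erase.mpr ⟨?_, ?_⟩)
            · rintro rfl; exact hh1 rfl
            · rwa [SimpleGraph.mem_neighborFinset]
          · rcases Sym2.eq_iff.mp h with ⟨h', -⟩ | ⟨h', -⟩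
            · exact absurd h' hu₁v₁.symm
            · exact absurd h'.symm hvv
          · rcases Sym2.eq_iff.mp h with ⟨h', -⟩ | ⟨-, rfl⟩
            · exact absurd h' hu₂v₁.symm
            · exact Finset.mem_insert_self _ _
        calc H₆.degree v₁ = (H₆.neighborFinset v₁).card := rfl
          _ ≤ (insert u₂ ((H₅.neighborFinset v₁).erase w)).card := Finset.card_le_card hsub
          _ ≤ ((H₅.neighborFinset v₁).erase w).card + 1 := Finset.card_insert_le _ _
          _ = (H₅.neighborFinset v₁).card - 1 + 1 :=
            by rw [Finset.card_erase_of_mem ((SimpleGraph.mem_neighborFinset _ _ _).mpr hadjwv₁.symm)]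
          _ ≤ H₅.degree v₁ := by
            have h2' : (H₅.neighborFinset v₁).card = H₅.degree v₁ := rfl
            omega
      by_cases h4 : x = v₀
      · rw [h4]
        have hsub : H₆.neighborFinset v₀ ⊆ insert u₁ ((H₅.neighborFinset v₀).erase v₂) := by
          intro y hy
          rw [SimpleGraph.mem_neighborFinset, hAdj₆] at hy
          rcases hy with ⟨h, _, hh2, _⟩ | (h | h)
          · refine Finset.mem_insert_of_mem (Finset.mem_erase.mpr ⟨?_, ?_⟩)
            · rintro rfl; exact hh2 rfl
            · rwa [SimpleGraph.mem_neighborFinset]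
          · rcases Sym2.eq_iff.mp h with ⟨h', -⟩ | ⟨-, rfl⟩
            · exact absurd h' hu₁v₀.symm
            · exact Finset.mem_insert_self _ _
          · rcases Sym2.eq_iff.mp h with ⟨h', -⟩ | ⟨h', -⟩
            · exact absurd h' hu₂v₀.symm
            · exact absurd h' hvv
        calc H₆.degree v₀ = (H₆.neighborFinset v₀).card := rfl
          _ ≤ (insert u₁ ((H₅.neighborFinset v₀).erase v₂)).card := Finset.card_le_card hsub
          _ ≤ ((H₅.neighborFinset v₀).erase v₂).card + 1 := Finset.card_insert_le _ _
          _ = (H₅.neighborFinset v₀).card - 1 + 1 :=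
            by rw [Finset.card_erase_of_mem ((SimpleGraph.mem_neighborFinset _ _ _).mpr hadjv₂v₀.symm)]
          _ ≤ H₅.degree v₀ := by
            have h2' : (H₅.neighborFinset v₀).card = H₅.degree v₀ := rfl
            omega
      · have hsub : H₆.neighborFinset x ⊆ H₅.neighborFinset x := by
          intro y hy
          rw [SimpleGraph.mem_neighborFinset, hAdj₆] at hy
          rw [SimpleGraph.mem_neighborFinset]
          rcases hy with ⟨h, _, _, _⟩ | (h | h)
          · exact h
          · rcases Sym2.eq_iff.mp h with ⟨h', _⟩ | ⟨h', _⟩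
            · exact absurd h' h1
            · exact absurd h' h4
          · rcases Sym2.eq_iff.mp h with ⟨h', _⟩ | ⟨h', _⟩
            · exact absurd h' h2
            · exact absurd h' h3
        exact Finset.card_le_card hsub
  -- edge set identities
  have hne₄ : ¬ H₅.Adj u₁ v₀ := fun h => hnadj₄ h.symm
  have hne₅ : ¬ H₅.Adj u₂ v₁ := fun h => hnadj₅ h.symm
  have hES : H₆.edgeSet =
      (H₅.edgeSet \ {s(v₁, w), s(v₀, v₂), s(u₁, u₂)}) ∪ {s(u₁, v₀), s(u₂, v₁)} := by
    rw [hH₆, SimpleGraph.edgeSet_fromEdgeSet]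
    ext e
    simp only [Set.mem_diff, Set.mem_union, Set.mem_setOf_eq, Set.mem_insert_iff,
      Set.mem_singleton_iff]
    constructor
    · rintro ⟨h, -⟩; exact h
    · rintro h
      refine ⟨h, ?_⟩
      rcases h with ⟨hmem, -⟩ | (rfl | rfl)
      · exact H₅.not_isDiag_of_mem_edgeSet hmem
      · rw [Sym2.mem_diagSet, Sym2.mk_isDiag_iff]; exact hu₁v₀
      · rw [Sym2.mem_diagSet, Sym2.mk_isDiag_iff]; exact hu₂v₁
  have hEF : H₆.edgeFinset =
      (H₅.edgeFinset \ {s(v₁, w), s(v₀, v₂), s(u₁, u₂)}) ∪ {s(u₁, v₀), s(u₂, v₁)} := by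
    apply Finset.coe_injective
    simp only [SimpleGraph.coe_edgeFinset, Finset.coe_union, Finset.coe_sdiff,
      Finset.coe_insert, Finset.coe_singleton]
    exact hES
  -- edge distinctness and membership
  have d₁₂ : s(v₁, w) ≠ s(v₀, v₂) := by
    intro heq
    rcases Sym2.eq_iff.mp heq with (⟨-, h⟩ | ⟨h, -⟩)
    · exact hv₂w h.symm
    · exact hv₁₂ h
  have d₁₃ : s(v₁, w) ≠ s(u₁, u₂) := by
    intro heq
    rcases Sym2.eq_iff.mp heq with (⟨h, -⟩ | ⟨h, -⟩)
    · exact hu₁v₁ h.symm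
    · exact hu₂v₁ h.symm
  have d₂₃ : s(v₀, v₂) ≠ s(u₁, u₂) := by
    intro heq
    rcases Sym2.eq_iff.mp heq with (⟨h, -⟩ | ⟨h, -⟩)
    · exact hu₁v₀ h.symm
    · exact hu₂v₀ h.symm
  have d₄₅ : s(u₁, v₀) ≠ s(u₂, v₁) := by
    intro heq
    rcases Sym2.eq_iff.mp heq with (⟨h, -⟩ | ⟨h, -⟩)
    · exact hu₁₂ h
    · exact hu₁v₁ h
  have hmem₁ : s(v₁, w) ∈ H₅.edgeFinset := by
    rw [SimpleGraph.mem_edgeFinset, SimpleGraph.mem_edgeSet]; exact hadjwv₁.symm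
  have hmem₂ : s(v₀, v₂) ∈ H₅.edgeFinset := by
    rw [SimpleGraph.mem_edgeFinset, SimpleGraph.mem_edgeSet]; exact hadjv₂v₀.symm
  have hmem₃ : s(u₁, u₂) ∈ H₅.edgeFinset := by
    rw [SimpleGraph.mem_edgeFinset, SimpleGraph.mem_edgeSet]; exact hadjU
  have hnm₄ : s(u₁, v₀) ∉ H₅.edgeFinset := by
    rw [SimpleGraph.mem_edgeFinset, SimpleGraph.mem_edgeSet]; exact hne₄
  have hnm₅ : s(u₂, v₁) ∉ H₅.edgeFinset := by
    rw [SimpleGraph.mem_edgeFinset, SimpleGraph.mem_edgeSet]; exact hne₅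
  set T : Finset (Sym2 V) := {s(v₁, w), s(v₀, v₂), s(u₁, u₂)} with hT
  have hTsub : T ⊆ H₅.edgeFinset := by
    intro e he
    rw [hT] at he
    rcases Finset.mem_insert.mp he with rfl | he
    · exact hmem₁
    rcases Finset.mem_insert.mp he with rfl | he
    · exact hmem₂
    rw [Finset.mem_singleton] at he; subst he
    exact hmem₃
  set f₅ : Sym2 V → ℕ :=
    Sym2.lift ⟨fun x y => H₅.degree x * H₅.degree y, fun _ _ => Nat.mul_comm _ _⟩ with hf₅
  set f₆ : Sym2 V → ℕ :=
    Sym2.lift ⟨fun x y => H₆.degree x * H₆.degree y, fun _ _ => Nat.mul_comm _ _⟩ with hf₆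
  have hpt : ∀ e : Sym2 V, f₆ e ≤ f₅ e := by
    intro e
    induction e using Sym2.ind with
    | _ x y =>
      simp only [hf₅, hf₆, Sym2.lift_mk]
      exact Nat.mul_le_mul (hD x) (hD y)
  have hsum₅ : zagrebM2 H₅ =
      ∑ e ∈ H₅.edgeFinset \ T, f₅ e + (f₅ s(v₁, w) + (f₅ s(v₀, v₂) + f₅ s(u₁, u₂))) := by
    have h1 : ∑ e ∈ T, f₅ e = f₅ s(v₁, w) + (f₅ s(v₀, v₂) + f₅ s(u₁, u₂)) := by
      rw [hT, Finset.sum_insert (by simp [d₁₂, d₁₃]),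
        Finset.sum_insert (by simp [d₂₃]), Finset.sum_singleton]
    rw [zagrebM2, ← h1, Finset.sum_sdiff hTsub]
  have hdisj : Disjoint (H₅.edgeFinset \ T) ({s(u₁, v₀), s(u₂, v₁)} : Finset (Sym2 V)) := by
    rw [Finset.disjoint_right]
    intro e he hmem
    rcases Finset.mem_insert.mp he with rfl | he
    · exact hnm₄ (Finset.mem_sdiff.mp hmem).1
    · rw [Finset.mem_singleton] at he; subst he
      exact hnm₅ (Finset.mem_sdiff.mp hmem).1
  have hsum₆ : zagrebM2 H₆ =
      ∑ e ∈ H₅.edgeFinset \ T, f₆ e + (f₆ s(u₁, v₀) + f₆ s(u₂, v₁)) := by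
    rw [zagrebM2, hEF, Finset.sum_union hdisj, Finset.sum_pair d₄₅]
  have hfe₁ : f₅ s(v₁, w) = 2 * H₅.degree w := by
    simp only [hf₅, Sym2.lift_mk]
    rw [hdv₁]
  have hfe₂ : f₅ s(v₀, v₂) = 4 := by
    simp only [hf₅, Sym2.lift_mk]
    rw [hdv₀, hdv₂]
  have hfe₃ : f₅ s(u₁, u₂) = H₅.degree u₁ * H₅.degree u₂ := by
    simp only [hf₅, Sym2.lift_mk]
  have hfe₄ : f₆ s(u₁, v₀) ≤ H₅.degree u₁ * 2 := by
    simp only [hf₆, Sym2.lift_mk]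
    exact Nat.mul_le_mul (hD u₁) (hdv₀ ▸ hD v₀)
  have hfe₅ : f₆ s(u₂, v₁) ≤ H₅.degree u₂ * 2 := by
    simp only [hf₆, Sym2.lift_mk]
    exact Nat.mul_le_mul (hD u₂) (hdv₁ ▸ hD v₁)
  rw [hsum₅, hsum₆]
  have hlt : H₅.degree u₁ * 2 + H₅.degree u₂ * 2 <
      2 * H₅.degree w + (4 + H₅.degree u₁ * H₅.degree u₂) := by
    nlinarith [ha, hb, hw]
  calc ∑ e ∈ H₅.edgeFinset \ T, f₆ e + (f₆ s(u₁, v₀) + f₆ s(u₂, v₁))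
      ≤ ∑ e ∈ H₅.edgeFinset \ T, f₅ e + (H₅.degree u₁ * 2 + H₅.degree u₂ * 2) :=
        add_le_add (Finset.sum_le_sum fun e _ => hpt e) (add_le_add hfe₄ hfe₅)
    _ < ∑ e ∈ H₅.edgeFinset \ T, f₅ e + (f₅ s(v₁, w) + (f₅ s(v₀, v₂) + f₅ s(u₁, u₂))) := by
        rw [hfe₁, hfe₂, hfe₃]
        exact Nat.add_lt_add_left hlt _
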